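/- Let c ∈ ℝ. Let f : ℝ → ℝ be strictly increasing and differentiable with f′(c) > 0, and let g : ℕ → ℝ be increasing (g(k) ≤ g(k+1)), concave (g(k+2) − g(k+1) ≤ g(k+1) − g(k)), bounded above, and positive (g(n) > 0 for all n ≥ 1). Define the variable-value function V(X) = f(Avg(X))·g(|X|). Then for all populations X and Y with V_CLc(X) > V_CLc(Y), there exists N such that every population Z with Avg(Z) = c and |Z| ≥ N satisfies V(X + Z) > V(Y + Z). -/

import Mathlib

/-- The size of a population: total number of welfare subjects. -/
noncomputable def psize (X : ℝ →₀ ℕ) : ℕ := X.sum fun _ n => n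

/-- Total welfare of a population. -/
noncomputable def ptot (X : ℝ →₀ ℕ) : ℝ := X.sum fun w n => (n : ℝ) * w

/-- Average welfare of a population. -/
noncomputable def pavg (X : ℝ →₀ ℕ) : ℝ := ptot X / (psize X : ℝ)

/-- Critical-level utilitarian value with critical level `c`. -/
noncomputable def vcl (c : ℝ) (X : ℝ →₀ ℕ) : ℝ := ptot X - c * (psize X : ℝ)

open Filter Topology

private lemma psize_add' (X Z : ℝ →₀ ℕ) : psize (X + Z) = psize X + psize Z := by
  unfold psize
  exact Finsupp.sum_add_index' (fun _ => rfl) (fun _ _ _ => rfl)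

private lemma ptot_add' (X Z : ℝ →₀ ℕ) : ptot (X + Z) = ptot X + ptot Z := by
  unfold ptot
  exact Finsupp.sum_add_index' (fun w => by simp) (fun w a b => by push_cast; ring)

private lemma psize_pos' (Z : ℝ →₀ ℕ) (hZ : Z ≠ 0) : 0 < psize Z := by
  rw [pos_iff_ne_zero]
  intro h
  apply hZ
  ext a
  by_cases ha : a ∈ Z.support
  · have := (Finset.sum_eq_zero_iff.mp h) a ha
    simpa using this
  · simpa using Finsupp.notMem_support_iff.mp ha

private lemma lim_f (f : ℝ → ℝ) (c A f' : ℝ) (hf : HasDerivAt f f' c) (m : ℕ) :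
    Tendsto (fun n : ℕ => (n : ℝ) * (f (c + A / ((m : ℝ) + n)) - f c)) atTop (𝓝 (f' * A)) := by
  rcases eq_or_ne A 0 with rfl | hA
  · simp
  · have hmn : ∀ᶠ n : ℕ in atTop, (0 : ℝ) < (m : ℝ) + n := by
      filter_upwards [eventually_gt_atTop 0] with n hn
      have : (0:ℝ) < (n:ℝ) := by exact_mod_cast hn
      positivity
    have hinf : Tendsto (fun n : ℕ => (m : ℝ) + n) atTop atTop :=
      tendsto_atTop_add_const_left _ _ tendsto_natCast_atTop_atTop
    have h1 : Tendsto (fun n : ℕ => A / ((m : ℝ) + n)) atTop (𝓝[≠] 0) := by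
      rw [tendsto_nhdsWithin_iff]
      constructor
      · have h := hinf.inv_tendsto_atTop.const_mul A
        rw [mul_zero] at h
        exact h.congr (fun n => by simp [Pi.inv_apply, div_eq_mul_inv])
      · filter_upwards [hmn] with n hn
        simp [div_ne_zero hA (ne_of_gt hn)]
    have h2 := hf.tendsto_slope_zero.comp h1
    have h3 : Tendsto (fun n : ℕ => (n : ℝ) * (A / ((m : ℝ) + n))) atTop (𝓝 A) := by
      have h := (tendsto_natCast_div_add_atTop (m : ℝ)).mul_const A
      rw [one_mul] at h
      refine h.congr' ?_
      filter_upwards [hmn] with n hn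
      have hne : (n : ℝ) + (m : ℝ) ≠ 0 := by linarith
      have hne2 : (m : ℝ) + (n : ℝ) ≠ 0 := by linarith
      field_simp
      ring
    have h4 := h2.mul h3
    simp only [smul_eq_mul] at h4
    refine (h4.congr' ?_)
    filter_upwards [hmn] with n hn
    have ht : A / ((m : ℝ) + n) ≠ 0 := div_ne_zero hA (ne_of_gt hn)
    simp only [Function.comp]
    field_simp

private lemma g_gap (g : ℕ → ℝ)
    (hgconc : ∀ k, g (k + 2) - g (k + 1) ≤ g (k + 1) - g k) (N : ℕ) :
    ∀ n, N ≤ n → ((n : ℝ) - N) * (g (n + 1) - g n) ≤ g n - g N := by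
  intro n hn
  induction n, hn using Nat.le_induction with
  | base => simp
  | succ k hk ih =>
    have hd := hgconc k
    have hkN : (N : ℝ) ≤ k := by exact_mod_cast hk
    have h1 : ((k : ℝ) + 1 - N) * (g (k + 2) - g (k + 1))
        ≤ ((k : ℝ) + 1 - N) * (g (k + 1) - g k) :=
      mul_le_mul_of_nonneg_left hd (by linarith)
    push_cast
    nlinarith [ih]

private lemma g_step_anti (g : ℕ → ℝ)
    (hgconc : ∀ k, g (k + 2) - g (k + 1) ≤ g (k + 1) - g k) :
    Antitone (fun k => g (k + 1) - g k) :=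
  antitone_nat_of_succ_le (fun k => hgconc k)

private lemma lim_nd (g : ℕ → ℝ) (hgmono : ∀ k, g k ≤ g (k + 1))
    (hgconc : ∀ k, g (k + 2) - g (k + 1) ≤ g (k + 1) - g k)
    (hgbdd : BddAbove (Set.range g)) :
    Tendsto (fun n : ℕ => (n : ℝ) * (g (n + 1) - g n)) atTop (𝓝 0) := by
  have hmono : Monotone g := monotone_nat_of_le_succ hgmono
  have hg := tendsto_atTop_ciSup hmono hgbdd
  set L := ⨆ i, g i with hLdef
  rw [Metric.tendsto_atTop]
  intro ε hε
  obtain ⟨N, hN⟩ := Metric.tendsto_atTop.mp hg (ε / 2) (by linarith)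
  refine ⟨2 * N + 1, fun n hn => ?_⟩
  have hNn : N ≤ n := by omega
  have h1 := g_gap g hgconc N n hNn
  have hd : 0 ≤ g (n + 1) - g n := by linarith [hgmono n]
  have hgL : g n ≤ L := le_ciSup hgbdd n
  have hgLN : g N ≤ L := le_ciSup hgbdd N
  have hdist : L - g N < ε / 2 := by
    have := hN N le_rfl
    rw [Real.dist_eq] at this
    rcases abs_lt.mp this with ⟨h, _⟩
    linarith
  have hhalf : (n : ℝ) ≤ 2 * ((n : ℝ) - N) := by
    have : 2 * N + 1 ≤ n := hn
    have : (2 * N + 1 : ℝ) ≤ n := by exact_mod_cast this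
    push_cast at this ⊢
    linarith
  have hb : (n : ℝ) * (g (n + 1) - g n) ≤ 2 * ((n : ℝ) - N) * (g (n + 1) - g n) :=
    mul_le_mul_of_nonneg_right hhalf hd
  have hnn : 0 ≤ (n : ℝ) * (g (n + 1) - g n) := by positivity
  rw [Real.dist_eq, sub_zero, abs_of_nonneg hnn]
  nlinarith

private lemma g_jump (g : ℕ → ℝ)
    (hgconc : ∀ k, g (k + 2) - g (k + 1) ≤ g (k + 1) - g k) (k : ℕ) :
    ∀ j : ℕ, g (k + j) - g k ≤ (j : ℝ) * (g (k + 1) - g k) := by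
  have hanti := g_step_anti g hgconc
  intro j
  induction j with
  | zero => simp
  | succ j ih =>
    have h1 : g (k + j + 1) - g (k + j) ≤ g (k + 1) - g k := hanti (Nat.le_add_right k j)
    have : k + (j + 1) = k + j + 1 := by omega
    rw [this]
    push_cast
    linarith

private lemma lim_gdiff (g : ℕ → ℝ) (hgmono : ∀ k, g k ≤ g (k + 1))
    (hgconc : ∀ k, g (k + 2) - g (k + 1) ≤ g (k + 1) - g k)
    (hgbdd : BddAbove (Set.range g)) (m m' : ℕ) :
    Tendsto (fun n : ℕ => (n : ℝ) * (g (m + n) - g (m' + n))) atTop (𝓝 0) := by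
  have hmono : Monotone g := monotone_nat_of_le_succ hgmono
  -- first the case m' ≤ m
  have main : ∀ a b : ℕ, b ≤ a →
      Tendsto (fun n : ℕ => (n : ℝ) * (g (a + n) - g (b + n))) atTop (𝓝 0) := by
    intro a b hba
    have hshift : Tendsto (fun n : ℕ => b + n) atTop atTop :=
      tendsto_atTop_mono (fun n => Nat.le_add_left n b) tendsto_id
    have h0 : Tendsto (fun n : ℕ => ((b + n : ℕ) : ℝ) * (g (b + n + 1) - g (b + n))) atTop
        (𝓝 0) := (lim_nd g hgmono hgconc hgbdd).comp hshift
    have h1 : Tendsto (fun n : ℕ => ((a - b : ℕ) : ℝ) *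
        (((b + n : ℕ) : ℝ) * (g (b + n + 1) - g (b + n)))) atTop (𝓝 0) := by
      simpa using h0.const_mul ((a - b : ℕ) : ℝ)
    refine tendsto_of_tendsto_of_tendsto_of_le_of_le tendsto_const_nhds h1 ?_ ?_
    · intro n
      have h := hmono (show b + n ≤ a + n by omega)
      exact mul_nonneg (Nat.cast_nonneg n) (sub_nonneg.mpr h)
    · intro n
      have hj := g_jump g hgconc (b + n) (a - b)
      have heq : b + n + (a - b) = a + n := by omega
      rw [heq] at hj
      have hd : 0 ≤ g (b + n + 1) - g (b + n) := by linarith [hgmono (b + n)]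
      have hn1 : (n : ℝ) ≤ ((b + n : ℕ) : ℝ) := by exact_mod_cast Nat.le_add_left n b
      have h2 : (n : ℝ) * (g (a + n) - g (b + n)) ≤
          (n : ℝ) * (((a - b : ℕ) : ℝ) * (g (b + n + 1) - g (b + n))) := by
        apply mul_le_mul_of_nonneg_left hj (by positivity)
      have h3 : (n : ℝ) * (((a - b : ℕ) : ℝ) * (g (b + n + 1) - g (b + n))) ≤
          ((a - b : ℕ) : ℝ) * (((b + n : ℕ) : ℝ) * (g (b + n + 1) - g (b + n))) := by
        have := mul_le_mul_of_nonneg_right hn1 hd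
        nlinarith [(Nat.cast_nonneg (a - b) : (0 : ℝ) ≤ ((a - b : ℕ) : ℝ))]
      exact h2.trans h3
  rcases le_total m' m with h | h
  · exact main m m' h
  · have := (main m' m h).neg
    simp only [neg_zero] at this
    refine this.congr (fun n => by ring)

theorem stmt_5 (c : ℝ) (f : ℝ → ℝ) (g : ℕ → ℝ)
    (hfmono : StrictMono f) (hfdiff : Differentiable ℝ f) (hfderiv : deriv f c > 0)
    (hgmono : ∀ k, g k ≤ g (k + 1))
    (hgconc : ∀ k, g (k + 2) - g (k + 1) ≤ g (k + 1) - g k)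
    (hgbdd : BddAbove (Set.range g))
    (hgpos : ∀ n : ℕ, n ≥ 1 → g n > 0)
    (V : (ℝ →₀ ℕ) → ℝ) (hV : ∀ X : ℝ →₀ ℕ, V X = f (pavg X) * g (psize X))
    (X Y : ℝ →₀ ℕ) (hX : X ≠ 0) (hY : Y ≠ 0)
    (hcl : vcl c X > vcl c Y) :
    ∃ N : ℕ, ∀ Z : ℝ →₀ ℕ, Z ≠ 0 → pavg Z = c → psize Z ≥ N →
      V (X + Z) > V (Y + Z) := by
  have hmono : Monotone g := monotone_nat_of_le_succ hgmono
  set m := psize X with hm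
  set m' := psize Y with hm'
  have hm1 : 0 < m := psize_pos' X hX
  have hm'1 : 0 < m' := psize_pos' Y hY
  set A := vcl c X with hA
  set B := vcl c Y with hB
  set f' := deriv f c with hf'
  have hfd : HasDerivAt f f' c := (hfdiff c).hasDerivAt
  set L := ⨆ i, g i with hL
  have hLpos : 0 < L := lt_of_lt_of_le (hgpos 1 le_rfl) (le_ciSup hgbdd 1)
  set F : ℕ → ℝ := fun n =>
    f (c + A / ((m : ℝ) + n)) * g (m + n) - f (c + B / ((m' : ℝ) + n)) * g (m' + n) with hF
  -- limit of g(m+n)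
  have hgL : ∀ k : ℕ, Tendsto (fun n : ℕ => g (k + n)) atTop (𝓝 L) := by
    intro k
    have hshift : Tendsto (fun n : ℕ => k + n) atTop atTop :=
      tendsto_atTop_mono (fun n => Nat.le_add_left n k) tendsto_id
    exact (tendsto_atTop_ciSup hmono hgbdd).comp hshift
  have hfc : ∀ (D : ℝ) (k : ℕ),
      Tendsto (fun n : ℕ => f (c + D / ((k : ℝ) + n))) atTop (𝓝 (f c)) := by
    intro D k
    have hinf : Tendsto (fun n : ℕ => (k : ℝ) + n) atTop atTop :=
      tendsto_atTop_add_const_left _ _ tendsto_natCast_atTop_atTop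
    have h1 : Tendsto (fun n : ℕ => c + D / ((k : ℝ) + n)) atTop (𝓝 c) := by
      have := hinf.inv_tendsto_atTop.const_mul D
      simp only [mul_zero] at this
      have h2 : Tendsto (fun n : ℕ => c + D * ((k : ℝ) + n)⁻¹) atTop (𝓝 (c + 0)) :=
        tendsto_const_nhds.add this
      rw [add_zero] at h2
      exact h2.congr (fun n => by rw [div_eq_mul_inv])
    exact ((hfdiff.continuous.tendsto c).comp h1)
  have key : Tendsto (fun n : ℕ => (n : ℝ) * F n) atTop (𝓝 (f' * (A - B) * L)) := by
    have T1 := (lim_f f c A f' hfd m).mul (hgL m)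
    have T2 := (lim_f f c B f' hfd m').mul (hgL m')
    have T3 := (lim_gdiff g hgmono hgconc hgbdd m m').const_mul (f c)
    simp only [mul_zero] at T3
    have := (T1.sub T2).add T3
    have heq : f' * A * L - f' * B * L + 0 = f' * (A - B) * L := by ring
    rw [heq] at this
    refine this.congr (fun n => ?_)
    simp only [hF]
    ring
  have hpos : 0 < f' * (A - B) * L :=
    mul_pos (mul_pos hfderiv (by linarith [hcl])) hLpos
  have hev : ∀ᶠ n : ℕ in atTop, 0 < (n : ℝ) * F n :=
    key.eventually (eventually_gt_nhds hpos)
  rw [eventually_atTop] at hev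
  obtain ⟨N, hN⟩ := hev
  refine ⟨N + 1, fun Z hZ hZavg hZsize => ?_⟩
  set n := psize Z with hn
  have hn1 : 0 < n := psize_pos' Z hZ
  have hnN : N ≤ n := by omega
  have hFn : 0 < (n : ℝ) * F n := hN n hnN
  have hnR : (0 : ℝ) < n := by exact_mod_cast hn1
  have hFpos : 0 < F n := by
    by_contra h
    push_neg at h
    nlinarith
  -- ptot Z = c * n
  have htotZ : ptot Z = c * n := by
    have : ptot Z / (n : ℝ) = c := hZavg
    field_simp at this
    linarith [this]
  have havgX : pavg (X + Z) = c + A / ((m : ℝ) + n) := by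
    unfold pavg
    rw [ptot_add' X Z, psize_add' X Z, htotZ]
    have hmn : ((m + n : ℕ) : ℝ) = (m : ℝ) + n := by push_cast; ring
    rw [hmn]
    have hne : (m : ℝ) + n ≠ 0 := by positivity
    rw [hA]
    unfold vcl
    field_simp
    ring
  have havgY : pavg (Y + Z) = c + B / ((m' : ℝ) + n) := by
    unfold pavg
    rw [ptot_add' Y Z, psize_add' Y Z, htotZ]
    have hmn : ((m' + n : ℕ) : ℝ) = (m' : ℝ) + n := by push_cast; ring
    rw [hmn]
    have hne : (m' : ℝ) + n ≠ 0 := by positivity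
    rw [hB]
    unfold vcl
    field_simp
    ring
  have : V (X + Z) - V (Y + Z) = F n := by
    rw [hV (X + Z), hV (Y + Z), havgX, havgY, psize_add' X Z, psize_add' Y Z]
  linarith
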